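/- On the alphabet A = {0,1}, the subshift Σ = {0^ω, (01)^ω, (10)^ω} is not traceable: there is no cellular automaton F on {0,1} with τ(F) = Σ (even though Σ is T1). -/

import Mathlib

variable {A : Type*}

/-- The onesided shift on `A^ℕ`. -/
def shiftN (z : ℕ → A) : ℕ → A := fun i => z (i + 1)

/-- The twosided shift on `A^ℤ`. -/
def shiftZ (x : ℤ → A) : ℤ → A := fun i => x (i + 1)

/-- A (onesided) subshift: a closed, shift-stable set of infinite words. -/
def IsSubshift [TopologicalSpace A] (S : Set (ℕ → A)) : Prop :=
  IsClosed S ∧ ∀ z ∈ S, shiftN z ∈ S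

/-- A 2-SFT: a subshift given by a set of forbidden words of length 2. -/
def IsTwoSFT (S : Set (ℕ → A)) : Prop :=
  ∃ Fb : Set (A × A), S = {z | ∀ i : ℕ, (z i, z (i + 1)) ∉ Fb}

/-- A k-SFT: a subshift given by a set of forbidden words of length k. -/
def IsKSFT (k : ℕ) (S : Set (ℕ → A)) : Prop :=
  ∃ Fb : Set (Fin k → A), S = {z | ∀ i : ℕ, (fun j : Fin k => z (i + (j : ℕ))) ∉ Fb}

/-- A subshift of finite type. -/
def IsSFT (S : Set (ℕ → A)) : Prop := ∃ k : ℕ, IsKSFT k S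

/-- A cellular automaton: a continuous self-map of `A^ℤ` commuting with the shift. -/
def IsCA [TopologicalSpace A] (F : (ℤ → A) → (ℤ → A)) : Prop :=
  Continuous F ∧ ∀ x, F (shiftZ x) = shiftZ (F x)

/-- The trace of `F` with initial condition `x`: the 0th column of the space-time diagram. -/
def caTrace (F : (ℤ → A) → (ℤ → A)) (x : ℤ → A) : ℕ → A := fun j => F^[j] x 0

/-- The trace subshift of `F`. -/
def traceSubshift (F : (ℤ → A) → (ℤ → A)) : Set (ℕ → A) := Set.range (caTrace F)

/-- A subshift is traceable if it is the trace subshift of some CA. -/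
def Traceable [TopologicalSpace A] (S : Set (ℕ → A)) : Prop :=
  ∃ F : (ℤ → A) → (ℤ → A), IsCA F ∧ traceSubshift F = S

/-- The q-th projection of an infinite word over the alphabet `A^k`. -/
def proj {k : ℕ} (q : Fin k) (z : ℕ → (Fin k → A)) : ℕ → A := fun j => z j q

/-- `π(Γ)`: the union of all projections. -/
def projAll {k : ℕ} (Γ : Set (ℕ → (Fin k → A))) : Set (ℕ → A) :=
  ⋃ q : Fin k, proj q '' Γ

/-- A subshift `S` on `A` is T1 if there is a 2-SFT `Γ ⊆ (A^k)^ℕ` with `π₀(Γ) = π(Γ) = S`. -/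
def IsT1 (S : Set (ℕ → A)) : Prop :=
  ∃ k : ℕ, ∃ hk : 0 < k, ∃ Γ : Set (ℕ → (Fin k → A)),
    IsTwoSFT Γ ∧ proj (⟨0, hk⟩ : Fin k) '' Γ = S ∧ projAll Γ = S

/-- A onesided CA: one admitting a local rule of anchor 0. -/
def IsOnesidedCA {C : Type*} (F : (ℤ → C) → (ℤ → C)) : Prop :=
  ∃ d : ℕ, ∃ f : (Fin d → C) → C, ∀ x i, F x i = f (fun j => x (i + (j : ℕ)))

/-- `S` is the k-trace of a onesided CA on some alphabet `B ⊆ A^k`. -/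
def KTraceable (k : ℕ) (S : Set (ℕ → A)) : Prop :=
  ∃ B : Set (Fin k → A), ∃ F : (ℤ → ↥B) → (ℤ → ↥B), IsOnesidedCA F ∧
    S = ⋃ q : Fin k, (fun z : ℕ → ↥B => fun j => ((z j : Fin k → A) q)) '' Set.range (caTrace F)

/-- `S` is a factor of `Γ`: a surjective continuous shift-commuting map from `Γ` onto `S`. -/
def IsFactorOf {B : Type*} [TopologicalSpace A] [TopologicalSpace B]
    (S : Set (ℕ → A)) (Γ : Set (ℕ → B)) : Prop :=
  ∃ φ : (ℕ → B) → (ℕ → A), ContinuousOn φ Γ ∧ φ '' Γ = S ∧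
    ∀ z ∈ Γ, φ (shiftN z) = shiftN (φ z)

/-- The language of a subshift: all finite factors of its elements. -/
def lang (S : Set (ℕ → A)) : Language A :=
  {w | ∃ z ∈ S, ∃ i : ℕ, w = List.ofFn (fun j : Fin w.length => z (i + (j : ℕ)))}

/-- A transitive subshift. -/
def IsTransitiveSubshift (S : Set (ℕ → A)) : Prop :=
  ∀ u ∈ lang S, ∀ v ∈ lang S, ∃ w : List A, u ++ w ++ v ∈ lang S

/-- A T2 subshift: sofic, and including an infinite transitive subshift. -/
def IsT2 [TopologicalSpace A] (S : Set (ℕ → A)) : Prop :=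
  (lang S).IsRegular ∧ ∃ Γ ⊆ S, IsSubshift Γ ∧ Γ.Infinite ∧ IsTransitiveSubshift Γ

/-- `B^ω`: infinite concatenations of words from `B ⊆ A^k`. -/
def Bomega {k : ℕ} (B : Set (Fin k → A)) : Set (ℕ → A) :=
  {z | ∀ i : ℕ, (fun q : Fin k => z (i * k + (q : ℕ))) ∈ B}

/-- A T3 subshift: T0 via a map `φ`, together with a periodic word `w ∉ φ(A)^*`. -/
def IsT3 (S : Set (ℕ → A)) : Prop :=
  ∃ φ : A → A, (∀ a : A, (fun j => φ^[j] a) ∈ S) ∧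
    ∃ w : List A, w ≠ [] ∧ (∃ a ∈ w, a ∉ Set.range φ) ∧
      ∃ z ∈ S, (∀ j : ℕ, z (j + w.length) = z j) ∧ ∀ i : Fin w.length, z (i : ℕ) = w.get i

/-- `0^ω` over `{0,1}`. -/
def zZero : ℕ → Fin 2 := fun _ => 0
/-- `(01)^ω` over `{0,1}`. -/
def zZeroOne : ℕ → Fin 2 := fun j => if j % 2 = 0 then 0 else 1
/-- `(10)^ω` over `{0,1}`. -/
def zOneZero : ℕ → Fin 2 := fun j => if j % 2 = 0 then 1 else 0

/-! ### Auxiliary material for statement 13 -/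

section Stmt13Aux

/-- The subshift of interest. -/
def Sig13 : Set (ℕ → Fin 2) := {zZero, zZeroOne, zOneZero}

/- Basic shift/iterate lemmas -/

lemma shiftZ_iterate {A : Type*} (k : ℕ) (y : ℤ → A) (i : ℤ) :
    shiftZ^[k] y i = y (i + k) := by
  induction k generalizing y with
  | zero => simp
  | succ k ih =>
    rw [Function.iterate_succ_apply, ih (shiftZ y)]
    show y (i + (k : ℤ) + 1) = y (i + (k + 1 : ℕ))
    congr 1
    push_cast
    ring

lemma ca_comm_shift_iter {A : Type*} {F : (ℤ → A) → (ℤ → A)}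
    (hF : ∀ x, F (shiftZ x) = shiftZ (F x)) (x : ℤ → A) (k : ℕ) :
    F (shiftZ^[k] x) = shiftZ^[k] (F x) := by
  induction k generalizing x with
  | zero => simp
  | succ k ih =>
    rw [Function.iterate_succ_apply, Function.iterate_succ_apply, ih (shiftZ x), hF]

lemma ca_iter_comm_shift_iter {A : Type*} {F : (ℤ → A) → (ℤ → A)}
    (hF : ∀ x, F (shiftZ x) = shiftZ (F x)) (x : ℤ → A) (j k : ℕ) :
    F^[j] (shiftZ^[k] x) = shiftZ^[k] (F^[j] x) := by
  induction j generalizing x with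
  | zero => simp
  | succ j ih =>
    rw [Function.iterate_succ_apply, ca_comm_shift_iter hF x k, ih (F x),
      ← Function.iterate_succ_apply]

/- Every column of a space-time diagram is a trace. -/

lemma col_mem {F : (ℤ → Fin 2) → (ℤ → Fin 2)} (hF : IsCA F)
    (hτ : traceSubshift F = Sig13) (x : ℤ → Fin 2) (i : ℕ) :
    (fun j : ℕ => F^[j] x (i : ℤ)) ∈ Sig13 := by
  have h : caTrace F (shiftZ^[i] x) = fun j : ℕ => F^[j] x (i : ℤ) := by
    funext j
    show F^[j] (shiftZ^[i] x) 0 = _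
    rw [ca_iter_comm_shift_iter hF.2, shiftZ_iterate]
    norm_num
  rw [← h, ← hτ]
  exact Set.mem_range_self _

lemma trace_facts {F : (ℤ → Fin 2) → (ℤ → Fin 2)} (hF : IsCA F)
    (hτ : traceSubshift F = Sig13) (x : ℤ → Fin 2) (i : ℕ) :
    (¬ (x (i : ℤ) = 1 ∧ F x (i : ℤ) = 1)) ∧ F (F x) (i : ℤ) = x (i : ℤ) := by
  have hm := col_mem hF hτ x i
  set z : ℕ → Fin 2 := fun j : ℕ => F^[j] x (i : ℤ) with hz
  have h0 : z 0 = x (i : ℤ) := rfl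
  have h1 : z 1 = F x (i : ℤ) := by simp [hz]
  have h2 : z 2 = F (F x) (i : ℤ) := by
    show F^[2] x (i : ℤ) = _
    have e : F^[2] x = F (F^[1] x) := Function.iterate_succ_apply' F 1 x
    rw [e, Function.iterate_one]
  have key : (¬ (z 0 = 1 ∧ z 1 = 1)) ∧ z 2 = z 0 := by
    simp only [Sig13, Set.mem_insert_iff, Set.mem_singleton_iff] at hm
    rcases hm with h | h | h <;> rw [h] <;> exact ⟨by decide, by decide⟩
  constructor
  · have := key.1
    rw [h0, h1] at this
    exact this
  · have := key.2
    rw [h2, h0] at this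
    exact this

/- Periodic configurations -/

def PerZ (n : ℕ) (y : ℤ → Fin 2) : Prop := ∀ i : ℤ, y (i + n) = y i

lemma perZ_shift {n : ℕ} {y : ℤ → Fin 2} (h : PerZ n y) : shiftZ^[n] y = y :=
  funext fun i => (shiftZ_iterate n y i).trans (h i)

lemma perZ_F {F : (ℤ → Fin 2) → (ℤ → Fin 2)}
    (hF2 : ∀ x, F (shiftZ x) = shiftZ (F x)) {n : ℕ} {y : ℤ → Fin 2}
    (h : PerZ n y) : PerZ n (F y) := by
  have h1 : shiftZ^[n] (F y) = F y := by
    rw [← ca_comm_shift_iter hF2 y n, perZ_shift h]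
  intro i
  calc F y (i + n) = shiftZ^[n] (F y) i := (shiftZ_iterate n (F y) i).symm
    _ = F y i := by rw [h1]

lemma perZ_emod {n : ℕ} (hn : 0 < n) {y : ℤ → Fin 2} (h : PerZ n y) (i : ℤ) :
    y (i % n) = y i := by
  have key : ∀ k : ℤ, ∀ i : ℤ, y (i + n * k) = y i := by
    intro k
    induction k using Int.induction_on with
    | zero => simp
    | succ k ih =>
      intro i
      have h1 := h (i + n * k)
      have h2 := ih i
      rw [show i + (n : ℤ) * ((k : ℤ) + 1) = (i + n * k) + n by ring]
      rw [h1, h2]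
    | pred k ih =>
      intro i
      have h1 := h (i + n * (-(k : ℤ) - 1))
      have h2 := ih i
      rw [show i + (n : ℤ) * (-(k : ℤ) - 1) + n = i + n * (-(k : ℤ)) by ring] at h1
      exact h1.symm.trans h2
  have hrep : i % (n : ℤ) + (n : ℤ) * (i / (n : ℤ)) = i := by
    rw [add_comm]
    exact Int.mul_ediv_add_emod i n
  calc y (i % n) = y (i % n + n * (i / n)) := (key (i / n) (i % n)).symm
    _ = y i := by rw [hrep]

/- The counting argument: an involution `g` on `ZMod n → Fin 2` such that `g v`
is always disjoint from `v` must be the complement map. -/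

lemma counting_aux {n : ℕ} [NeZero n] (g : (ZMod n → Fin 2) → (ZMod n → Fin 2))
    (hinv : Function.Involutive g)
    (hdisj : ∀ v j, ¬ (v j = 1 ∧ g v j = 1)) (v : ZMod n → Fin 2) (j : ZMod n) :
    g v j = 1 - v j := by
  classical
  have hfin : ∀ a : Fin 2, a = 0 ∨ a = 1 := by decide
  set c : (ZMod n → Fin 2) → (ZMod n → Fin 2) := fun u i => 1 - u i with hc
  have hcinv : Function.Involutive c := by
    intro u
    funext i
    show 1 - (1 - u i) = u i
    have : ∀ a : Fin 2, 1 - (1 - a) = a := by decide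
    exact this (u i)
  have hle : ∀ u (i : ZMod n), (g u i).val ≤ (c u i).val := by
    intro u i
    rcases hfin (u i) with h | h
    · have h1 : c u i = 1 := by simp [hc, h]
      have h2 := (g u i).isLt
      rw [h1]
      omega
    · have h0 : g u i = 0 := by
        rcases hfin (g u i) with h' | h'
        · exact h'
        · exact absurd ⟨h, h'⟩ (hdisj u i)
      rw [h0]
      exact Nat.zero_le _
  have hsum : ∑ u : ZMod n → Fin 2, ∑ i : ZMod n, (g u i).val
      = ∑ u : ZMod n → Fin 2, ∑ i : ZMod n, (c u i).val := by
    have e1 : ∑ u : ZMod n → Fin 2, ∑ i : ZMod n, (g u i).val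
        = ∑ u : ZMod n → Fin 2, ∑ i : ZMod n, (u i).val :=
      Equiv.sum_comp hinv.toPerm (fun u : ZMod n → Fin 2 => ∑ i : ZMod n, (u i).val)
    have e2 : ∑ u : ZMod n → Fin 2, ∑ i : ZMod n, (c u i).val
        = ∑ u : ZMod n → Fin 2, ∑ i : ZMod n, (u i).val :=
      Equiv.sum_comp hcinv.toPerm (fun u : ZMod n → Fin 2 => ∑ i : ZMod n, (u i).val)
    rw [e1, e2]
  have hall : ∀ u : ZMod n → Fin 2,
      ∑ i : ZMod n, (g u i).val = ∑ i : ZMod n, (c u i).val := by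
    have := (Finset.sum_eq_sum_iff_of_le
      (fun u _ => Finset.sum_le_sum (fun i _ => hle u i))).mp hsum
    exact fun u => this u (Finset.mem_univ u)
  have hj := (Finset.sum_eq_sum_iff_of_le (fun i _ => hle v i)).mp (hall v) j
    (Finset.mem_univ j)
  exact Fin.val_injective hj

/- Periodic configurations are complemented by `F`. -/

lemma periodic_comp {F : (ℤ → Fin 2) → (ℤ → Fin 2)} (hF : IsCA F)
    (hτ : traceSubshift F = Sig13) {m : ℕ} {y : ℤ → Fin 2}
    (hper : PerZ (2 * m + 1) y) : F y 0 = 1 - y 0 := by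
  set n : ℕ := 2 * m + 1 with hn_def
  have hn : 0 < n := by omega
  haveI : NeZero n := ⟨by omega⟩
  set E : (ZMod n → Fin 2) → (ℤ → Fin 2) := fun u i => u (i : ZMod n) with hE
  have hEper : ∀ u, PerZ n (E u) := by
    intro u i
    show u _ = u _
    congr 1
    have hzero : ((n : ℕ) : ZMod n) = 0 := ZMod.natCast_self n
    rw [hn_def] at hzero
    push_cast at hzero ⊢
    simp
  have hEval : ∀ u (j : ZMod n), E u ((j.val : ℕ) : ℤ) = u j := by
    intro u j
    show u _ = u j
    congr 1
    rw [Int.cast_natCast]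
    exact ZMod.natCast_zmod_val j
  set g : (ZMod n → Fin 2) → (ZMod n → Fin 2) :=
    fun u j => F (E u) ((j.val : ℕ) : ℤ) with hg
  have hEg : ∀ u, E (g u) = F (E u) := by
    intro u
    funext i
    show g u (i : ZMod n) = F (E u) i
    show F (E u) ((((i : ZMod n)).val : ℕ) : ℤ) = F (E u) i
    have hv : ((((i : ZMod n)).val : ℕ) : ℤ) = i % n := ZMod.val_intCast i
    rw [hv]
    exact perZ_emod hn (perZ_F hF.2 (hEper u)) i
  have hginv : Function.Involutive g := by
    intro u
    funext j
    show F (E (g u)) ((j.val : ℕ) : ℤ) = u j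
    rw [hEg u, (trace_facts hF hτ (E u) j.val).2]
    exact hEval u j
  have hgdisj : ∀ u j, ¬ (u j = 1 ∧ g u j = 1) := by
    rintro u j ⟨h1, h2⟩
    exact (trace_facts hF hτ (E u) j.val).1 ⟨(hEval u j).symm ▸ h1, h2⟩
  set v : ZMod n → Fin 2 := fun j => y ((j.val : ℕ) : ℤ) with hv
  have hEv : E v = y := by
    funext i
    show v (i : ZMod n) = y i
    show y ((((i : ZMod n)).val : ℕ) : ℤ) = y i
    rw [ZMod.val_intCast]
    exact perZ_emod hn hper i
  have hcount := counting_aux g hginv hgdisj v 0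
  have h1 : g v 0 = F y 0 := by
    show F (E v) (((0 : ZMod n).val : ℕ) : ℤ) = F y 0
    rw [hEv]
    norm_num [ZMod.val_zero]
  have h2 : v 0 = y 0 := by
    show y (((0 : ZMod n).val : ℕ) : ℤ) = y 0
    norm_num [ZMod.val_zero]
  rw [h1, h2] at hcount
  exact hcount

/- `bmod` balances an integer into `[-m, m]` modulo `2m+1`. -/

lemma bmod_eq_self_of_abs_le {m : ℕ} {i : ℤ} (h1 : -(m : ℤ) ≤ i) (h2 : i ≤ m) :
    Int.bmod i (2 * m + 1) = i := by
  have hhalf : (((2 * m + 1 : ℕ) : ℤ) + 1) / 2 = (m : ℤ) + 1 := by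
    push_cast
    omega
  rcases le_or_gt 0 i with h | h
  · have hmod : i % ((2 * m + 1 : ℕ) : ℤ) = i :=
      Int.emod_eq_of_lt h (by push_cast; omega)
    rw [Int.bmod_pos]
    · exact hmod
    · rw [hmod, hhalf]
      omega
  · have hmod : i % ((2 * m + 1 : ℕ) : ℤ) = i + (2 * m + 1 : ℕ) := by
      have e1 : (i + ((2 * m + 1 : ℕ) : ℤ) * 1) % ((2 * m + 1 : ℕ) : ℤ)
          = i % ((2 * m + 1 : ℕ) : ℤ) :=
        Int.add_mul_emod_self_left i ((2 * m + 1 : ℕ) : ℤ) 1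
      rw [← e1, mul_one]
      exact Int.emod_eq_of_lt (by push_cast; omega) (by push_cast; omega)
    rw [Int.bmod_neg]
    · rw [hmod]
      push_cast
      ring
    · rw [hmod, hhalf]
      push_cast
      omega

/- Part 2 : not traceable. -/

lemma sig13_not_traceable : ¬ Traceable Sig13 := by
  rintro ⟨F, hF, hτ⟩
  -- a preimage of 0^ω
  have hz : zZero ∈ traceSubshift F := by
    rw [hτ]
    exact Set.mem_insert _ _
  obtain ⟨x, hx⟩ := hz
  have hx0 : x 0 = 0 := by
    have := congrFun hx 0
    simpa [caTrace, zZero] using this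
  have hFx0 : F x 0 = 0 := by
    have := congrFun hx 1
    simpa [caTrace, zZero] using this
  -- an open set witnessing the values at the origin
  have hcont : Continuous (fun y : ℤ → Fin 2 => (y 0, F y 0)) :=
    (continuous_apply (0 : ℤ)).prodMk ((continuous_apply (0 : ℤ)).comp hF.1)
  have hUopen : IsOpen ((fun y : ℤ → Fin 2 => (y 0, F y 0)) ⁻¹'
      {((0 : Fin 2), (0 : Fin 2))}) := (isOpen_discrete _).preimage hcont
  have hxU : x ∈ (fun y : ℤ → Fin 2 => (y 0, F y 0)) ⁻¹'
      {((0 : Fin 2), (0 : Fin 2))} := by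
    simp [hx0, hFx0]
  obtain ⟨I, u, hIu, hsub⟩ := isOpen_pi_iff.mp hUopen x hxU
  set m : ℕ := I.sup Int.natAbs with hm_def
  set y : ℤ → Fin 2 := fun i => x (Int.bmod i (2 * m + 1)) with hy
  have hyper : PerZ (2 * m + 1) y := by
    intro i
    show x _ = x _
    congr 1
    exact Int.add_bmod_right i (2 * m + 1)
  have hagree : ∀ i : ℤ, i.natAbs ≤ m → y i = x i := by
    intro i hi
    show x _ = x i
    congr 1
    exact bmod_eq_self_of_abs_le (by omega) (by omega)
  have hyU : y ∈ (fun y : ℤ → Fin 2 => (y 0, F y 0)) ⁻¹'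
      {((0 : Fin 2), (0 : Fin 2))} := by
    apply hsub
    intro i hi
    have h1 : y i = x i := hagree i (Finset.le_sup hi)
    rw [h1]
    exact (hIu i hi).2
  have hy0 : y 0 = 0 ∧ F y 0 = 0 := by
    have := hyU
    simp only [Set.mem_preimage, Set.mem_singleton_iff, Prod.mk.injEq] at this
    exact this
  have hcomp := periodic_comp hF hτ hyper
  rw [hy0.1, hy0.2] at hcomp
  exact absurd hcomp (by decide)

/- Part 1 : T1. -/

def gA : Fin 2 → Fin 2 := ![0, 0]
def gB : Fin 2 → Fin 2 := ![0, 1]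
def gC : Fin 2 → Fin 2 := ![1, 0]

def A0 : ℕ → (Fin 2 → Fin 2) := fun _ => gA
def A01 : ℕ → (Fin 2 → Fin 2) := fun j => if j % 2 = 0 then gB else gC
def A10 : ℕ → (Fin 2 → Fin 2) := fun j => if j % 2 = 0 then gC else gB

def Allowed13 (p : (Fin 2 → Fin 2) × (Fin 2 → Fin 2)) : Prop :=
  (p.1 = gA ∧ p.2 = gA) ∨ (p.1 = gB ∧ p.2 = gC) ∨ (p.1 = gC ∧ p.2 = gB)

def Gam13 : Set (ℕ → (Fin 2 → Fin 2)) := {A0, A01, A10}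

lemma gam13_twoSFT : IsTwoSFT Gam13 := by
  classical
  refine ⟨{p | ¬ Allowed13 p}, ?_⟩
  ext z
  simp only [Gam13, Set.mem_insert_iff, Set.mem_singleton_iff, Set.mem_setOf_eq,
    not_not]
  constructor
  · rintro (rfl | rfl | rfl) <;> intro i
    · exact Or.inl ⟨rfl, rfl⟩
    · rcases Nat.mod_two_eq_zero_or_one i with h | h
      · have h2 : (i + 1) % 2 = 1 := by omega
        exact Or.inr (Or.inl ⟨by simp [A01, h], by simp [A01, h2]⟩)
      · have h2 : (i + 1) % 2 = 0 := by omega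
        exact Or.inr (Or.inr ⟨by simp [A01, h], by simp [A01, h2]⟩)
    · rcases Nat.mod_two_eq_zero_or_one i with h | h
      · have h2 : (i + 1) % 2 = 1 := by omega
        exact Or.inr (Or.inr ⟨by simp [A10, h], by simp [A10, h2]⟩)
      · have h2 : (i + 1) % 2 = 0 := by omega
        exact Or.inr (Or.inl ⟨by simp [A10, h], by simp [A10, h2]⟩)
  · intro hz
    have hfour : ∀ g : Fin 2 → Fin 2, g = gA ∨ g = gB ∨ g = gC ∨ g = ![1, 1] := by
      decide
    have hAB : gA ≠ gB := by decide
    have hAC : gA ≠ gC := by decide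
    have hBC : gB ≠ gC := by decide
    have hD1 : gA ≠ ![1, 1] := by decide
    have hD2 : gB ≠ ![1, 1] := by decide
    have hD3 : gC ≠ ![1, 1] := by decide
    rcases hfour (z 0) with h0 | h0 | h0 | h0
    · -- z = A0
      left
      funext j
      induction j with
      | zero => exact h0
      | succ j ih =>
        rcases hz j with ⟨h1, h2⟩ | ⟨h1, h2⟩ | ⟨h1, h2⟩
        · exact h2
        · exact absurd (ih.symm.trans h1) hAB
        · exact absurd (ih.symm.trans h1) hAC
    · -- z = A01
      right; left
      funext j
      induction j with
      | zero =>
        simpa [A01] using h0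
      | succ j ih =>
        rcases Nat.mod_two_eq_zero_or_one j with h | h
        · have hij : z j = gB := by simpa [A01, h] using ih
          have h2 : (j + 1) % 2 = 1 := by omega
          rcases hz j with ⟨h1, h2'⟩ | ⟨h1, h2'⟩ | ⟨h1, h2'⟩
          · exact absurd (hij.symm.trans h1) (Ne.symm hAB)
          · simpa [A01, h2] using h2'
          · exact absurd (hij.symm.trans h1) hBC
        · have hij : z j = gC := by simpa [A01, h] using ih
          have h2 : (j + 1) % 2 = 0 := by omega
          rcases hz j with ⟨h1, h2'⟩ | ⟨h1, h2'⟩ | ⟨h1, h2'⟩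
          · exact absurd (hij.symm.trans h1) (Ne.symm hAC)
          · exact absurd (hij.symm.trans h1) (Ne.symm hBC)
          · simpa [A01, h2] using h2'
    · -- z = A10
      right; right
      funext j
      induction j with
      | zero =>
        simpa [A10] using h0
      | succ j ih =>
        rcases Nat.mod_two_eq_zero_or_one j with h | h
        · have hij : z j = gC := by simpa [A10, h] using ih
          have h2 : (j + 1) % 2 = 1 := by omega
          rcases hz j with ⟨h1, h2'⟩ | ⟨h1, h2'⟩ | ⟨h1, h2'⟩
          · exact absurd (hij.symm.trans h1) (Ne.symm hAC)
          · exact absurd (hij.symm.trans h1) (Ne.symm hBC)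
          · simpa [A10, h2] using h2'
        · have hij : z j = gB := by simpa [A10, h] using ih
          have h2 : (j + 1) % 2 = 0 := by omega
          rcases hz j with ⟨h1, h2'⟩ | ⟨h1, h2'⟩ | ⟨h1, h2'⟩
          · exact absurd (hij.symm.trans h1) (Ne.symm hAB)
          · simpa [A10, h2] using h2'
          · exact absurd (hij.symm.trans h1) hBC
    · -- z 0 = ![1,1] impossible
      exfalso
      rcases hz 0 with ⟨h1, _⟩ | ⟨h1, _⟩ | ⟨h1, _⟩
      · exact hD1 (h1.symm.trans h0)
      · exact hD2 (h1.symm.trans h0)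
      · exact hD3 (h1.symm.trans h0)

lemma proj0_A0 : proj (0 : Fin 2) A0 = zZero := by
  funext j
  simp [proj, A0, gA, zZero]

lemma proj0_A01 : proj (0 : Fin 2) A01 = zZeroOne := by
  funext j
  rcases Nat.mod_two_eq_zero_or_one j with h | h <;>
    simp [proj, A01, gB, gC, zZeroOne, h]

lemma proj0_A10 : proj (0 : Fin 2) A10 = zOneZero := by
  funext j
  rcases Nat.mod_two_eq_zero_or_one j with h | h <;>
    simp [proj, A10, gB, gC, zOneZero, h]

lemma proj1_A0 : proj (1 : Fin 2) A0 = zZero := by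
  funext j
  simp [proj, A0, gA, zZero]

lemma proj1_A01 : proj (1 : Fin 2) A01 = zOneZero := by
  funext j
  rcases Nat.mod_two_eq_zero_or_one j with h | h <;>
    simp [proj, A01, gB, gC, zOneZero, h]

lemma proj1_A10 : proj (1 : Fin 2) A10 = zZeroOne := by
  funext j
  rcases Nat.mod_two_eq_zero_or_one j with h | h <;>
    simp [proj, A10, gB, gC, zZeroOne, h]

lemma proj0_image : proj (0 : Fin 2) '' Gam13 = Sig13 := by
  show proj (0 : Fin 2) '' {A0, A01, A10} = _
  rw [Set.image_insert_eq, Set.image_insert_eq, Set.image_singleton,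
    proj0_A0, proj0_A01, proj0_A10]
  rfl

lemma proj1_image : proj (1 : Fin 2) '' Gam13 = Sig13 := by
  show proj (1 : Fin 2) '' {A0, A01, A10} = _
  rw [Set.image_insert_eq, Set.image_insert_eq, Set.image_singleton,
    proj1_A0, proj1_A01, proj1_A10]
  show insert zZero {zOneZero, zZeroOne} = insert zZero {zZeroOne, zOneZero}
  rw [Set.pair_comm]

lemma sig13_isT1 : IsT1 Sig13 := by
  refine ⟨2, by norm_num, Gam13, gam13_twoSFT, ?_, ?_⟩
  · have : (⟨0, by norm_num⟩ : Fin 2) = (0 : Fin 2) := rfl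
    rw [this]
    exact proj0_image
  · show (⋃ q : Fin 2, proj q '' Gam13) = Sig13
    have hq : ∀ q : Fin 2, proj q '' Gam13 = Sig13 := by
      intro q
      fin_cases q
      · exact proj0_image
      · exact proj1_image
    rw [Set.iUnion_congr hq, Set.iUnion_const]

end Stmt13Aux

/-- The subshift `{0^ω, (01)^ω, (10)^ω}` on `{0,1}` is T1 but not traceable. -/
theorem stmt13 :
    IsT1 ({zZero, zZeroOne, zOneZero} : Set (ℕ → Fin 2)) ∧
      ¬ Traceable ({zZero, zZeroOne, zOneZero} : Set (ℕ → Fin 2)) := by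
  exact ⟨sig13_isT1, sig13_not_traceable⟩
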